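/- Let B be a Bratteli diagram with finitely many sources and let ℓ be the associated length function. Then for every real t ≥ 0 and every infinite path y ∈ X_B, the set {x ∈ X_B : x is tail-equivalent to y and ℓ(x,y) ≤ t} has at most t + 1 elements. In particular, the tail-equivalence groupoid of B has polynomial (indeed linear) growth with respect to ℓ. -/

import Mathlib

/-- A Bratteli diagram: nonempty finite vertex levels `V n` (`n ≥ 0`), finite edge
sets `E n` consisting of the edges from level `n` to level `n + 1`, with source and
target maps, such that every vertex emits at least one edge. -/
structure BratteliDiagram where
  V : ℕ → Type
  E : ℕ → Type
  vFinite : ∀ n, Finite (V n)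
  vNonempty : ∀ n, Nonempty (V n)
  eFinite : ∀ n, Finite (E n)
  src : ∀ n, E n → V n
  tgt : ∀ n, E n → V (n + 1)
  src_surjective : ∀ n, Function.Surjective (src n)

namespace BratteliDiagram

variable (B : BratteliDiagram)

/-- A vertex is a source if no edge has it as its target (in particular, every
level-0 vertex is a source). -/
def IsSource : (n : ℕ) → B.V n → Prop
  | 0, _ => True
  | n + 1, v => ¬ ∃ e : B.E n, B.tgt n e = v

/-- `B` has finitely many sources: beyond some level there are no sources. -/
def FinSources : Prop :=
  ∃ N : ℕ, ∀ n : ℕ, N < n → ∀ v : B.V n, ¬ B.IsSource n v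

/-- The type of finite paths in `B` starting at some source and ending at the
vertex `w` of level `k` (including the empty path when `w` itself is a source). -/
def PathEnd : (k : ℕ) → B.V k → Type
  | 0, w => PLift (B.IsSource 0 w)
  | k + 1, w =>
      PLift (B.IsSource (k + 1) w) ⊕
        Σ e : B.E k, PLift (B.tgt k e = w) × PathEnd k (B.src k e)

/-- `c_k = Σ_{v ∈ S(B)} |P(v, V_k)|`: the total number of finite paths from the
sources of `B` to level `k`. -/
noncomputable def pathCount (k : ℕ) : ℕ :=
  Nat.card (Σ w : B.V k, B.PathEnd k w)

/-- An infinite path of `B` starting at a source: `edge n _` is the edge from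
level `n` to level `n + 1` followed by the path (defined for `n ≥ start`). -/
structure InfPath where
  start : ℕ
  edge : ∀ n, start ≤ n → B.E n
  start_isSource : B.IsSource start (B.src start (edge start le_rfl))
  compat : ∀ n (h : start ≤ n),
    B.src (n + 1) (edge (n + 1) (h.trans (Nat.le_succ n))) = B.tgt n (edge n h)

variable {B}

/-- `x` and `y` both start at level at most `m` and their edges agree from
level `m` on (i.e. `x_n = y_n` for all paper-levels `n > m`). -/
def AgreesFrom (x y : B.InfPath) (m : ℕ) : Prop :=
  ∃ (hx : x.start ≤ m) (hy : y.start ≤ m),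
    ∀ n (h : m ≤ n), x.edge n (hx.trans h) = y.edge n (hy.trans h)

/-- Tail equivalence of infinite paths. -/
def TailEquiv (x y : B.InfPath) : Prop :=
  ∃ m : ℕ, AgreesFrom x y m

/-- `k(x,y)`: the least level from which the infinite paths `x` and `y` agree. -/
noncomputable def kIdx (x y : B.InfPath) : ℕ :=
  sInf {m : ℕ | AgreesFrom x y m}

/-- The length function associated with the Bratteli diagram `B`:
`ℓ(x,y) = c_{k(x,y)}` for `x ≠ y` and `ℓ(x,x) = 0`. -/
noncomputable def len (x y : B.InfPath) : ℕ :=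
  letI := Classical.dec (x = y)
  if x = y then 0 else B.pathCount (kIdx x y)

end BratteliDiagram

namespace BratteliDiagram

variable {B : BratteliDiagram}

lemma pathEnd_finite : ∀ (k : ℕ) (w : B.V k), Finite (B.PathEnd k w)
  | 0, w => by unfold PathEnd; exact Finite.of_subsingleton
  | k + 1, w => by
      haveI := B.eFinite k
      haveI := fun e : B.E k => pathEnd_finite k (B.src k e)
      unfold PathEnd
      infer_instance

instance sigmaPathEndFinite (k : ℕ) : Finite (Σ w : B.V k, B.PathEnd k w) := by
  haveI := B.vFinite k
  haveI := fun w : B.V k => pathEnd_finite (B := B) k w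
  infer_instance

lemma e_nonempty (n : ℕ) : Nonempty (B.E n) := by
  obtain ⟨v⟩ := B.vNonempty n
  obtain ⟨e, -⟩ := B.src_surjective n v
  exact ⟨e⟩

noncomputable def junkE (n : ℕ) : B.E n := Classical.choice (e_nonempty n)

lemma isSource_of_eq (x : B.InfPath) {k : ℕ} (hx : x.start ≤ k) (e : k = x.start) :
    B.IsSource k (B.src k (x.edge k hx)) := by
  subst e; exact x.start_isSource

noncomputable def trunc (x : B.InfPath) : ∀ (k : ℕ) (hx : x.start ≤ k),
    B.PathEnd k (B.src k (x.edge k hx))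
  | 0, _ => PLift.up trivial
  | k + 1, hx =>
    if h : x.start ≤ k then
      Sum.inr ⟨x.edge k h, PLift.up (x.compat k h).symm, trunc x k h⟩
    else
      Sum.inl (PLift.up (isSource_of_eq x hx (by omega)))

noncomputable def pStart : ∀ (k : ℕ), (Σ w : B.V k, B.PathEnd k w) → ℕ
  | 0, _ => 0
  | k + 1, ⟨_, Sum.inl _⟩ => k + 1
  | k + 1, ⟨_, Sum.inr ⟨e, _, p⟩⟩ => pStart k ⟨B.src k e, p⟩

noncomputable def pEdge : ∀ (k : ℕ), (Σ w : B.V k, B.PathEnd k w) → ∀ n : ℕ, B.E n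
  | 0, _, n => junkE n
  | _ + 1, ⟨_, Sum.inl _⟩, n => junkE n
  | k + 1, ⟨_, Sum.inr ⟨e, _, p⟩⟩, n =>
      if h : n = k then h ▸ e else pEdge k ⟨B.src k e, p⟩ n


lemma InfPath.ext' {x x' : B.InfPath} (h1 : x.start = x'.start)
    (h2 : ∀ n (hn : x.start ≤ n) (hn' : x'.start ≤ n), x.edge n hn = x'.edge n hn') :
    x = x' := by
  rcases x with ⟨s, e, hs, hc⟩
  rcases x' with ⟨s', e', hs', hc'⟩
  dsimp at h1 h2
  subst h1
  have he : e = e' := by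
    funext n h
    exact h2 n h h
  subst he
  rfl

lemma pStart_trunc (x : B.InfPath) : ∀ (k : ℕ) (hx : x.start ≤ k),
    pStart k ⟨_, trunc x k hx⟩ = x.start
  | 0, hx => by
      simp [pStart]
      omega
  | k + 1, hx => by
      by_cases h : x.start ≤ k
      · rw [trunc]
        erw [dif_pos h]
        rw [pStart]
        exact pStart_trunc x k h
      · rw [trunc]
        erw [dif_neg h]
        rw [pStart]
        omega

lemma pEdge_trunc (x : B.InfPath) : ∀ (k : ℕ) (hx : x.start ≤ k) (n : ℕ) (hn : x.start ≤ n),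
    n < k → pEdge k ⟨_, trunc x k hx⟩ n = x.edge n hn
  | 0, hx, n, hn, hnk => by omega
  | k + 1, hx, n, hn, hnk => by
      have h : x.start ≤ k := by omega
      rw [trunc]
      erw [dif_pos h]
      rw [pEdge]
      by_cases hk : n = k
      · subst hk
        simp
      · simp only [hk, dite_false]
        exact pEdge_trunc x k h n hn (by omega)

lemma trunc_injective (k : ℕ) (x x' : B.InfPath) (hx : x.start ≤ k) (hx' : x'.start ≤ k)
    (hsig : (⟨_, trunc x k hx⟩ : Σ w, B.PathEnd k w) = ⟨_, trunc x' k hx'⟩)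
    (htail : ∀ n (h : k ≤ n), x.edge n (hx.trans h) = x'.edge n (hx'.trans h)) : x = x' := by
  have hstart : x.start = x'.start := by
    rw [← pStart_trunc x k hx, ← pStart_trunc x' k hx', hsig]
  apply InfPath.ext' hstart
  intro n hn hn'
  rcases lt_or_ge n k with hlt | hge
  · rw [← pEdge_trunc x k hx n hn hlt, ← pEdge_trunc x' k hx' n hn' hlt, hsig]
  · exact htail n hge


lemma pathEnd_nonempty : ∀ (k : ℕ) (w : B.V k), Nonempty (B.PathEnd k w)
  | 0, w => ⟨PLift.up trivial⟩
  | k + 1, w => by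
      by_cases h : ∃ e : B.E k, B.tgt k e = w
      · obtain ⟨e, he⟩ := h
        obtain ⟨p⟩ := pathEnd_nonempty k (B.src k e)
        exact ⟨Sum.inr ⟨e, PLift.up he, p⟩⟩
      · exact ⟨Sum.inl (PLift.up h)⟩

lemma sigma_cast {k : ℕ} {a b : B.V k} (h : a = b) (p : B.PathEnd k b) :
    (⟨a, cast (congrArg (B.PathEnd k) h.symm) p⟩ : Σ w, B.PathEnd k w) = ⟨b, p⟩ := by
  subst h; simp

lemma pathCount_le_succ (k : ℕ) : B.pathCount k ≤ B.pathCount (k + 1) := by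
  classical
  set f : B.V k → B.E k := fun w => (B.src_surjective k w).choose with hfdef
  have hf : ∀ w, B.src k (f w) = w := fun w => (B.src_surjective k w).choose_spec
  set F : (Σ w : B.V k, B.PathEnd k w) → (Σ w : B.V (k + 1), B.PathEnd (k + 1) w) :=
    fun q => ⟨B.tgt k (f q.1), Sum.inr ⟨f q.1, PLift.up rfl,
      cast (congrArg (B.PathEnd k) (hf q.1).symm) q.2⟩⟩ with hFdef
  have hNE : Nonempty (Σ w : B.V k, B.PathEnd k w) := by
    obtain ⟨v⟩ := B.vNonempty k
    obtain ⟨p⟩ := pathEnd_nonempty (B := B) k v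
    exact ⟨⟨v, p⟩⟩
  set G : (Σ w : B.V (k + 1), B.PathEnd (k + 1) w) → (Σ w : B.V k, B.PathEnd k w) :=
    fun q => match q with
      | ⟨_, Sum.inl _⟩ => Classical.choice hNE
      | ⟨_, Sum.inr ⟨e, _, p⟩⟩ => ⟨B.src k e, p⟩ with hGdef
  have hGF : Function.LeftInverse G F := by
    rintro ⟨w, p⟩
    show (⟨B.src k (f w), cast (congrArg (B.PathEnd k) (hf w).symm) p⟩ : Σ w, B.PathEnd k w)
      = ⟨w, p⟩
    exact sigma_cast (hf w) p
  exact Nat.card_le_card_of_injective F hGF.injective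

lemma pathCount_mono : Monotone B.pathCount :=
  monotone_nat_of_le_succ pathCount_le_succ

lemma agreesFrom_mono {x y : B.InfPath} {m m' : ℕ} (h : AgreesFrom x y m) (hm : m ≤ m') :
    AgreesFrom x y m' := by
  obtain ⟨h1, h2, h3⟩ := h
  exact ⟨h1.trans hm, h2.trans hm, fun n hn => h3 n (hm.trans hn)⟩

lemma agreesFrom_self (y : B.InfPath) : AgreesFrom y y y.start :=
  ⟨le_rfl, le_rfl, fun _ _ => rfl⟩

lemma agrees_finite (y : B.InfPath) (k : ℕ) :
    Finite {x : B.InfPath // AgreesFrom x y k} ∧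
      Nat.card {x : B.InfPath // AgreesFrom x y k} ≤ B.pathCount k := by
  classical
  set Φ : {x : B.InfPath // AgreesFrom x y k} → Σ w : B.V k, B.PathEnd k w :=
    fun q => ⟨_, trunc q.1 k q.2.choose⟩ with hΦdef
  have hΦ : Function.Injective Φ := by
    rintro ⟨x, hA⟩ ⟨x', hA'⟩ h
    obtain ⟨hx1, hy1, hxy⟩ := hA
    obtain ⟨hx1', hy1', hxy'⟩ := hA'
    refine Subtype.ext (trunc_injective k x x' hx1 hx1' h ?_)
    intro n hn
    rw [hxy n hn, hxy' n hn]
  exact ⟨Finite.of_injective Φ hΦ, Nat.card_le_card_of_injective Φ hΦ⟩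

end BratteliDiagram

open BratteliDiagram in
/-- Lemma 4.7: the tail-equivalence groupoid of a Bratteli diagram with finitely many
sources has linear growth with respect to the length function `ℓ`: for every `t ≥ 0`
and every infinite path `y`, the set of `x` tail-equivalent to `y` with `ℓ(x,y) ≤ t`
has at most `t + 1` elements. -/
theorem bratteliLen_linear_growth (B : BratteliDiagram) (hB : B.FinSources)
    (t : ℝ) (ht : 0 ≤ t) (y : B.InfPath) :
    {x : B.InfPath | TailEquiv x y ∧ (len x y : ℝ) ≤ t}.Finite ∧
      (Nat.card {x : B.InfPath // TailEquiv x y ∧ (len x y : ℝ) ≤ t} : ℝ) ≤ t + 1 := by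
  classical
  set S : Set B.InfPath := {x : B.InfPath | TailEquiv x y ∧ (len x y : ℝ) ≤ t} with hSdef
  by_cases hsub : S ⊆ {y}
  · have hfin : S.Finite := (Set.finite_singleton y).subset hsub
    refine ⟨hfin, ?_⟩
    have h1 : S.ncard ≤ 1 := by
      calc S.ncard ≤ ({y} : Set B.InfPath).ncard :=
            Set.ncard_le_ncard hsub (Set.finite_singleton y)
        _ = 1 := Set.ncard_singleton y
    have h2 : Nat.card {x : B.InfPath // TailEquiv x y ∧ (len x y : ℝ) ≤ t} = S.ncard := by
      exact Nat.card_coe_set_eq S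
    rw [h2]
    have : (S.ncard : ℝ) ≤ 1 := by exact_mod_cast h1
    linarith
  · obtain ⟨x₀, hx₀S, hx₀y⟩ := Set.not_subset.mp hsub
    have hx₀y' : x₀ ≠ y := hx₀y
    obtain ⟨hte₀, hlen₀⟩ := hx₀S
    have hlen₀' : (B.pathCount (kIdx x₀ y) : ℝ) ≤ t := by
      rwa [len, if_neg hx₀y'] at hlen₀
    have hne₀ : {m : ℕ | AgreesFrom x₀ y m}.Nonempty := hte₀
    have hk₀A : AgreesFrom x₀ y (kIdx x₀ y) := Nat.sInf_mem hne₀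
    have hyk₀ : y.start ≤ kIdx x₀ y := by
      obtain ⟨h1, h2, h3⟩ := hk₀A; exact h2
    have key : ∀ x ∈ S, ∃ m, AgreesFrom x y m ∧ (B.pathCount m : ℝ) ≤ t := by
      intro x hx
      by_cases hxy : x = y
      · subst hxy
        exact ⟨_, agreesFrom_mono (agreesFrom_self x) hyk₀, hlen₀'⟩
      · obtain ⟨hte, hlen⟩ := hx
        refine ⟨kIdx x y, Nat.sInf_mem hte, ?_⟩
        rwa [len, if_neg hxy] at hlen
    have key' : ∀ x : B.InfPath, ∃ m, x ∈ S → AgreesFrom x y m ∧ (B.pathCount m : ℝ) ≤ t := by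
      intro x
      by_cases hx : x ∈ S
      · obtain ⟨m, hm⟩ := key x hx; exact ⟨m, fun _ => hm⟩
      · exact ⟨0, fun h => absurd h hx⟩
    choose m hm using key'
    have boundF : ∀ F : Finset B.InfPath, ↑F ⊆ S → F.card ≤ ⌊t⌋₊ := by
      intro F hF
      rcases F.eq_empty_or_nonempty with rfl | hFne
      · simp
      obtain ⟨x₁, hx₁F, hx₁⟩ := Finset.exists_mem_eq_sup F hFne m
      have hKt : (B.pathCount (F.sup m) : ℝ) ≤ t := by
        rw [hx₁]
        exact (hm x₁ (hF hx₁F)).2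
      have hsubK : ↑F ⊆ {x : B.InfPath | AgreesFrom x y (F.sup m)} := by
        intro x hxF
        exact agreesFrom_mono (hm x (hF hxF)).1 (Finset.le_sup hxF)
      haveI hfinK : Finite ↥{x : B.InfPath | AgreesFrom x y (F.sup m)} := (agrees_finite y (F.sup m)).1
      calc F.card = (↑F : Set B.InfPath).ncard := (Set.ncard_coe_finset F).symm
        _ ≤ ({x : B.InfPath | AgreesFrom x y (F.sup m)}).ncard :=
            Set.ncard_le_ncard hsubK (Set.toFinite _)
        _ = Nat.card {x : B.InfPath // AgreesFrom x y (F.sup m)} :=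
            (Nat.card_coe_set_eq _).symm
        _ ≤ B.pathCount (F.sup m) := (agrees_finite y (F.sup m)).2
        _ ≤ ⌊t⌋₊ := Nat.le_floor hKt
    have hSfin : S.Finite := by
      by_contra hinf
      obtain ⟨F, hFS, hFcard⟩ := Set.Infinite.exists_subset_card_eq hinf (⌊t⌋₊ + 1)
      have := boundF F hFS
      omega
    refine ⟨hSfin, ?_⟩
    have hcard0 : Nat.card {x : B.InfPath // TailEquiv x y ∧ (len x y : ℝ) ≤ t}
        = S.ncard := Nat.card_coe_set_eq S
    have hcard : Nat.card {x : B.InfPath // TailEquiv x y ∧ (len x y : ℝ) ≤ t}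
        = hSfin.toFinset.card := by
      rw [hcard0, Set.ncard_eq_toFinset_card S hSfin]
    have hb := boundF hSfin.toFinset (by simp)
    rw [hcard]
    have h1 : (hSfin.toFinset.card : ℝ) ≤ (⌊t⌋₊ : ℝ) := by exact_mod_cast hb
    have h2 : (⌊t⌋₊ : ℝ) ≤ t := Nat.floor_le ht
    linarith
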